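/- Let p be a prime and f = a_0 + a_1 x + ... + a_n x^n ∈ ℤ[x] a primitive polynomial such that there exist indices j and ℓ with 1 ≤ ℓ+1 ≤ j ≤ n for which (i) p ∤ a_j, (ii) v_p(a_ℓ) ≤ ((j-ℓ)/j)·v_p(a_i) for each i = 0, 1, ..., j-1 with i ≠ ℓ and a_i ≠ 0, and (iii) gcd(v_p(a_ℓ), j-ℓ) = 1. Then any factorization f = f₁ f₂ in ℤ[x] has a factor of degree ≥ j - ℓ. -/

import Mathlib

open Polynomial Finset

/-- In a nonempty finset of naturals with weight `w`, there is a largest minimizer `r`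
and a smallest minimizer `r'`. -/
private lemma argmin_pair (s : Finset ℕ) (hs : s.Nonempty) (w : ℕ → ℕ) :
    ∃ r r', r ∈ s ∧ r' ∈ s ∧ r' ≤ r ∧ w r = w r' ∧ (∀ k ∈ s, w r ≤ w k) ∧
      (∀ k ∈ s, r < k → w r < w k) ∧ (∀ k ∈ s, k < r' → w r' < w k) := by
  classical
  set t := s.filter (fun k => ∀ k' ∈ s, w k ≤ w k') with htdef
  have htne : t.Nonempty := by
    obtain ⟨a, ha, hk⟩ := s.exists_min_image w hs
    exact ⟨a, mem_filter.mpr ⟨ha, hk⟩⟩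
  refine ⟨t.max' htne, t.min' htne, ?_⟩
  have hrt := t.max'_mem htne
  have hr't := t.min'_mem htne
  obtain ⟨hrs, hrmin⟩ := mem_filter.mp hrt
  obtain ⟨hr's, hr'min⟩ := mem_filter.mp hr't
  refine ⟨hrs, hr's, t.min'_le _ hrt, le_antisymm (hrmin _ hr's) (hr'min _ hrs), hrmin, ?_, ?_⟩
  · intro k hk hlt
    by_contra hcon
    push_neg at hcon
    have hkt : k ∈ t := mem_filter.mpr ⟨hk, fun k' hk' => le_trans hcon (hrmin k' hk')⟩
    exact absurd (t.le_max' k hkt) (by omega)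
  · intro k hk hlt
    by_contra hcon
    push_neg at hcon
    have hkt : k ∈ t := mem_filter.mpr ⟨hk, fun k' hk' => le_trans hcon (hr'min k' hk')⟩
    exact absurd (t.min'_le k hkt) (by omega)

/-- If `gcd(d, m) = 1` and `deg g < d`, the weight `k ↦ d·v_p(g_k) + m·k` has a unique
minimizer on the support of `g`. -/
private lemma unique_achiever (p : ℕ) (d m : ℕ) (hd : 0 < d) (hcop : Nat.Coprime d m)
    (g : Polynomial ℤ) (hg : g ≠ 0) (hdeg : g.natDegree < d) :
    ∃ r ∈ g.support, ∀ k ∈ g.support, k ≠ r →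
      d * padicValInt p (g.coeff r) + m * r < d * padicValInt p (g.coeff k) + m * k := by
  have hsupp : g.support.Nonempty := nonempty_support_iff.mpr hg
  obtain ⟨r, r', hrs, hr's, hle, heq, hmin, hstrict, hstrict'⟩ :=
    argmin_pair g.support hsupp (fun k => d * padicValInt p (g.coeff k) + m * k)
  -- show r = r'
  have hale : padicValInt p (g.coeff r) ≤ padicValInt p (g.coeff r') := by
    have h1 : m * r' ≤ m * r := Nat.mul_le_mul_left m hle
    have h2 : d * padicValInt p (g.coeff r) ≤ d * padicValInt p (g.coeff r') := by omega
    exact Nat.le_of_mul_le_mul_left h2 hd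
  have heqz : (d : ℤ) * padicValInt p (g.coeff r) + m * r
      = d * padicValInt p (g.coeff r') + m * r' := by exact_mod_cast heq
  have hsub : m * (r - r') = d * (padicValInt p (g.coeff r') - padicValInt p (g.coeff r)) := by
    zify [hle, hale]
    linarith
  have hdvd : d ∣ (r - r') := hcop.dvd_of_dvd_mul_left ⟨_, hsub⟩
  have hlt : r - r' < d := by
    have := le_natDegree_of_mem_supp r hrs
    omega
  have hrr' : r = r' := by
    have := Nat.eq_zero_of_dvd_of_lt hdvd hlt
    omega
  subst hrr'
  refine ⟨r, hrs, fun k hk hne => ?_⟩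
  rcases lt_or_gt_of_ne hne with h | h
  · have := hstrict' k hk h
    omega
  · exact hstrict k hk h

/-- Key product lemma: if `r`, `s` are the unique weight-minimizers of `g`, `h`, then the
coefficient of `g*h` at `r+s` is nonzero with weight exactly the sum of the minimal weights,
and every other nonzero coefficient of `g*h` has strictly bigger weight. -/
private lemma prod_weight (p : ℕ) [Fact p.Prime] (d m : ℕ) (hd : 0 < d)
    (g h : Polynomial ℤ) (r s : ℕ)
    (hr : r ∈ g.support) (hs : s ∈ h.support)
    (hrU : ∀ k ∈ g.support, k ≠ r →
      d * padicValInt p (g.coeff r) + m * r < d * padicValInt p (g.coeff k) + m * k)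
    (hsU : ∀ k ∈ h.support, k ≠ s →
      d * padicValInt p (h.coeff s) + m * s < d * padicValInt p (h.coeff k) + m * k) :
    ((g * h).coeff (r + s) ≠ 0 ∧
      d * padicValInt p ((g * h).coeff (r + s)) + m * (r + s)
        = (d * padicValInt p (g.coeff r) + m * r) + (d * padicValInt p (h.coeff s) + m * s)) ∧
    ∀ t, t ≠ r + s → (g * h).coeff t ≠ 0 →
      (d * padicValInt p (g.coeff r) + m * r) + (d * padicValInt p (h.coeff s) + m * s)
        < d * padicValInt p ((g * h).coeff t) + m * t := by
  classical
  have hgr : g.coeff r ≠ 0 := mem_support_iff.mp hr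
  have hhs : h.coeff s ≠ 0 := mem_support_iff.mp hs
  set V := padicValInt p (g.coeff r) + padicValInt p (h.coeff s) with hV
  -- termwise bound
  have hterm : ∀ u v : ℕ, g.coeff u * h.coeff v ≠ 0 → (u, v) ≠ (r, s) →
      d * padicValInt p (g.coeff r) + m * r + (d * padicValInt p (h.coeff s) + m * s) + 1
        ≤ d * padicValInt p (g.coeff u) + m * u + (d * padicValInt p (h.coeff v) + m * v) := by
    intro u v hne hpair
    have hu : u ∈ g.support := mem_support_iff.mpr (left_ne_zero_of_mul hne)
    have hv : v ∈ h.support := mem_support_iff.mpr (right_ne_zero_of_mul hne)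
    by_cases hur : u = r
    · subst hur
      have hvs' : v ≠ s := by
        intro hh; exact hpair (by rw [hh])
      have := hsU v hv hvs'
      omega
    · have hg1 := hrU u hu hur
      have hh1 : d * padicValInt p (h.coeff s) + m * s
          ≤ d * padicValInt p (h.coeff v) + m * v := by
        by_cases hvs' : v = s
        · subst hvs'; omega
        · exact le_of_lt (hsU v hv hvs')
      omega
  -- split off the (r,s) term
  have hmemrs : (r, s) ∈ antidiagonal (r + s) := by simp [HasAntidiagonal.mem_antidiagonal]
  have hcm : (g * h).coeff (r + s)
      = g.coeff r * h.coeff s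
        + ∑ x ∈ (antidiagonal (r + s)).erase (r, s), g.coeff x.1 * h.coeff x.2 := by
    rw [coeff_mul, ← Finset.add_sum_erase _ _ hmemrs]
  set M := ∑ x ∈ (antidiagonal (r + s)).erase (r, s), g.coeff x.1 * h.coeff x.2 with hMdef
  have hMdvd : (p : ℤ) ^ (V + 1) ∣ M := by
    refine Finset.dvd_sum fun x hx => ?_
    by_cases hx0 : g.coeff x.1 * h.coeff x.2 = 0
    · simp [hx0]
    · have hxne : (x.1, x.2) ≠ (r, s) := by
        have hx1 := (Finset.mem_erase.mp hx).1
        simpa using hx1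
      have hxsum : x.1 + x.2 = r + s := mem_antidiagonal.mp (Finset.mem_erase.mp hx).2
      have hb := hterm x.1 x.2 hx0 hxne
      have hmx : m * x.1 + m * x.2 = m * r + m * s := by
        rw [← Nat.mul_add, ← Nat.mul_add, hxsum]
      have hVlt : d * V + 1 ≤ d * (padicValInt p (g.coeff x.1) + padicValInt p (h.coeff x.2)) := by
        rw [hV, Nat.mul_add, Nat.mul_add]
        omega
      have hVlt' : V + 1 ≤ padicValInt p (g.coeff x.1) + padicValInt p (h.coeff x.2) := by
        rcases Nat.lt_or_ge (padicValInt p (g.coeff x.1) + padicValInt p (h.coeff x.2)) (V + 1)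
          with hlt | hge
        · exfalso
          have := Nat.mul_le_mul_left d (Nat.le_of_lt_succ hlt)
          omega
        · exact hge
      calc (p : ℤ) ^ (V + 1)
          ∣ (p : ℤ) ^ (padicValInt p (g.coeff x.1) + padicValInt p (h.coeff x.2)) :=
            pow_dvd_pow _ hVlt'
        _ ∣ g.coeff x.1 * h.coeff x.2 := by
            rw [pow_add]
            exact mul_dvd_mul (padicValInt_dvd _) (padicValInt_dvd _)
  have hbrs : padicValInt p (g.coeff r * h.coeff s) = V := padicValInt.mul hgr hhs
  have hbrs_ne : g.coeff r * h.coeff s ≠ 0 := mul_ne_zero hgr hhs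
  have hndvd : ¬ (p : ℤ) ^ (V + 1) ∣ g.coeff r * h.coeff s := by
    rw [padicValInt_dvd_iff, hbrs]
    push_neg
    exact ⟨hbrs_ne, by omega⟩
  have hcne : (g * h).coeff (r + s) ≠ 0 := by
    intro h0
    rw [hcm] at h0
    have : g.coeff r * h.coeff s = -M := by linarith
    exact hndvd (this ▸ (dvd_neg.mpr hMdvd))
  have hVdvd : (p : ℤ) ^ V ∣ (g * h).coeff (r + s) := by
    rw [hcm]
    exact dvd_add (hbrs ▸ padicValInt_dvd _)
      (dvd_trans (pow_dvd_pow _ (Nat.le_succ V)) hMdvd)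
  have hVndvd : ¬ (p : ℤ) ^ (V + 1) ∣ (g * h).coeff (r + s) := by
    intro hdv
    rw [hcm] at hdv
    have h' := dvd_sub hdv hMdvd
    exact hndvd (by simpa using h')
  have hval : padicValInt p ((g * h).coeff (r + s)) = V := by
    have h1 := (padicValInt_dvd_iff V ((g * h).coeff (r + s))).mp hVdvd
    have h2 : ¬((g * h).coeff (r + s) = 0 ∨ V + 1 ≤ padicValInt p ((g * h).coeff (r + s))) := by
      rw [← padicValInt_dvd_iff]; exact hVndvd
    push_neg at h2
    rcases h1 with h1 | h1
    · exact absurd h1 hcne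
    · omega
  constructor
  · refine ⟨hcne, ?_⟩
    rw [hval, hV]
    ring
  · -- strictness at other indices
    intro t ht hct
    by_contra hcon
    push_neg at hcon
    set K := padicValInt p ((g * h).coeff t) with hK
    have hdvdK : (p : ℤ) ^ (K + 1) ∣ (g * h).coeff t := by
      rw [coeff_mul]
      refine Finset.dvd_sum fun x hx => ?_
      by_cases hx0 : g.coeff x.1 * h.coeff x.2 = 0
      · simp [hx0]
      · have hxsum : x.1 + x.2 = t := mem_antidiagonal.mp hx
        have hxne : (x.1, x.2) ≠ (r, s) := by
          intro hh
          apply ht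
          rw [← hxsum, (Prod.ext_iff.mp hh).1, (Prod.ext_iff.mp hh).2]
        have hb := hterm x.1 x.2 hx0 hxne
        have hmx : m * x.1 + m * x.2 = m * t := by
          rw [← Nat.mul_add, hxsum]
        have hKd : d * K + 1 ≤ d * (padicValInt p (g.coeff x.1) + padicValInt p (h.coeff x.2)) := by
          rw [Nat.mul_add]
          omega
        have hK1 : K + 1 ≤ padicValInt p (g.coeff x.1) + padicValInt p (h.coeff x.2) := by
          rcases Nat.lt_or_ge (padicValInt p (g.coeff x.1) + padicValInt p (h.coeff x.2)) (K + 1)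
            with hlt | hge
          · exfalso
            have := Nat.mul_le_mul_left d (Nat.le_of_lt_succ hlt)
            omega
          · exact hge
        calc (p : ℤ) ^ (K + 1)
            ∣ (p : ℤ) ^ (padicValInt p (g.coeff x.1) + padicValInt p (h.coeff x.2)) :=
              pow_dvd_pow _ hK1
          _ ∣ g.coeff x.1 * h.coeff x.2 := by
              rw [pow_add]
              exact mul_dvd_mul (padicValInt_dvd _) (padicValInt_dvd _)
    have := (padicValInt_dvd_iff (K + 1) ((g * h).coeff t)).mp hdvdK
    rcases this with h1 | h1
    · exact hct h1
    · omega

/-- Corollary 1 of the paper specialized to ℤ. -/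
theorem dumas_general_factor_degree_cor (p : ℕ) (hp : p.Prime) (f : Polynomial ℤ) (n : ℕ)
    (hn : f.natDegree = n) (hprim : f.IsPrimitive) (j ℓ : ℕ)
    (hℓj : ℓ + 1 ≤ j) (hjn : j ≤ n)
    (h1 : ¬ (p : ℤ) ∣ f.coeff j)
    (h2 : ∀ i, i < j → i ≠ ℓ → f.coeff i ≠ 0 →
      padicValInt p (f.coeff ℓ) * j ≤ padicValInt p (f.coeff i) * (j - ℓ))
    (h3 : Nat.gcd (padicValInt p (f.coeff ℓ)) (j - ℓ) = 1) :
    ∀ f₁ f₂ : Polynomial ℤ, f = f₁ * f₂ →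
      j - ℓ ≤ f₁.natDegree ∨ j - ℓ ≤ f₂.natDegree := by
  haveI : Fact p.Prime := ⟨hp⟩
  intro f₁ f₂ hf
  by_contra hcon
  push_neg at hcon
  obtain ⟨hdeg1, hdeg2⟩ := hcon
  set d := j - ℓ with hd
  set m := padicValInt p (f.coeff ℓ) with hm
  have hdpos : 0 < d := by omega
  have haj : f.coeff j ≠ 0 := fun h => h1 (h ▸ dvd_zero _)
  have hfne : f ≠ 0 := fun h => haj (by simp [h])
  have hf1ne : f₁ ≠ 0 := fun h => hfne (by rw [hf, h, zero_mul])
  have hf2ne : f₂ ≠ 0 := fun h => hfne (by rw [hf, h, mul_zero])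
  -- case d = 1
  rcases Nat.eq_or_lt_of_le hdpos with hd1 | hd2
  · have hdegf : f.natDegree = f₁.natDegree + f₂.natDegree := by
      rw [hf]; exact natDegree_mul hf1ne hf2ne
    omega
  -- main case : d ≥ 2
  have hm1 : 1 ≤ m := by
    rcases Nat.eq_zero_or_pos m with h0 | h0
    · rw [h0] at h3
      simp at h3
      omega
    · exact h0
  have haℓ : f.coeff ℓ ≠ 0 := by
    intro h
    rw [hm, h, padicValInt.zero] at hm1
    omega
  have hcop : Nat.Coprime d m := (Nat.coprime_comm.mp h3)
  -- unique achievers in each factor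
  obtain ⟨r, hr, hrU⟩ := unique_achiever p d m hdpos hcop f₁ hf1ne hdeg1
  obtain ⟨s, hs, hsU⟩ := unique_achiever p d m hdpos hcop f₂ hf2ne hdeg2
  obtain ⟨⟨hcne, hweq⟩, hstrict⟩ := prod_weight p d m hdpos f₁ f₂ r s hr hs hrU hsU
  rw [← hf] at hcne hweq hstrict
  -- all support weights of f are ≥ m * j
  have hsuppw : ∀ k : ℕ, f.coeff k ≠ 0 → m * j ≤ d * padicValInt p (f.coeff k) + m * k := by
    intro k hk
    rcases lt_trichotomy k j with hkj | hkj | hkj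
    · by_cases hkℓ : k = ℓ
      · subst hkℓ
        have hdk : d + k = j := by omega
        have hmm : d * m + m * k = m * j := by rw [← hdk]; ring
        rw [← hm]
        omega
      · have := h2 k hkj hkℓ hk
        calc m * j ≤ padicValInt p (f.coeff k) * d := this
          _ ≤ d * padicValInt p (f.coeff k) + m * k := by rw [mul_comm]; omega
    · subst hkj
      omega
    · have : m * j ≤ m * k := Nat.mul_le_mul_left m (le_of_lt hkj)
      omega
  -- weight at ℓ and j is exactly m * j
  have hwℓ : d * padicValInt p (f.coeff ℓ) + m * ℓ = m * j := by
    have : d + ℓ = j := by omega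
    calc d * padicValInt p (f.coeff ℓ) + m * ℓ = d * m + m * ℓ := by rw [← hm]
      _ = m * (d + ℓ) := by ring
      _ = m * j := by rw [this]
  have hvj : padicValInt p (f.coeff j) = 0 := padicValInt.eq_zero_of_not_dvd h1
  have hwj : d * padicValInt p (f.coeff j) + m * j = m * j := by rw [hvj]; ring
  -- r + s has weight Wg + Wh ≥ m*j ; ℓ and j must both equal r+s
  have hW : m * j ≤ (d * padicValInt p (f₁.coeff r) + m * r)
      + (d * padicValInt p (f₂.coeff s) + m * s) := by
    rw [← hweq]
    exact hsuppw (r + s) hcne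
  have hℓeq : ℓ = r + s := by
    by_contra hne
    have := hstrict ℓ hne haℓ
    omega
  have hjeq : j = r + s := by
    by_contra hne
    have := hstrict j hne haj
    omega
  omega
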